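/- Let E = E_1 ⊕ E_2 be an even-dimensional vector space and λ, λ_1 two 2-forms with E_2 ⊆ Ker λ, λ_1|_{E_1} = 0 and λ_1|_{E_2} = 0. If the restriction of λ_1 to Ker λ has corank two and E_1 ∩ Ker(λ_1|_{Ker λ}) has dimension at least one, then λ + λ_1 has corank exactly two on E. -/

import Mathlib

open Module LinearMap

private lemma skew_of_alt {𝕜 V : Type*} [Field 𝕜] [AddCommGroup V] [Module 𝕜 V]
    (B : V →ₗ[𝕜] V →ₗ[𝕜] 𝕜) (hB : ∀ v, B v v = 0) (u v : V) : B u v = - B v u := by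
  have h := hB (u + v)
  simp only [map_add, LinearMap.add_apply, hB u, hB v] at h
  linear_combination h

universe u

private lemma alt_parity_aux {𝕜 : Type*} [Field 𝕜] :
    ∀ (n : ℕ) (V : Type u) [AddCommGroup V] [Module 𝕜 V] [FiniteDimensional 𝕜 V]
      (B : V →ₗ[𝕜] V →ₗ[𝕜] 𝕜), (∀ v, B v v = 0) → Module.finrank 𝕜 V ≤ n →
      Even (Module.finrank 𝕜 V + Module.finrank 𝕜 (LinearMap.ker B)) := by
  intro n
  induction n with
  | zero =>
    intro V _ _ _ B hB hle
    have h0 : finrank 𝕜 V = 0 := Nat.le_zero.mp hle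
    have h1 : finrank 𝕜 (LinearMap.ker B) ≤ finrank 𝕜 V := Submodule.finrank_le _
    rw [Nat.even_iff]; omega
  | succ n ih =>
    intro V _ _ _ B hB hle
    by_cases hz : ∀ x y, B x y = 0
    · have hk : LinearMap.ker B = ⊤ := by
        rw [LinearMap.ker_eq_top]; ext x y; simp [hz]
      rw [hk, finrank_top]
      exact ⟨finrank 𝕜 V, rfl⟩
    · push_neg at hz
      obtain ⟨u, w, huw⟩ := hz
      have skew : ∀ x y, B x y = - B y x := skew_of_alt B hB
      set f : V →ₗ[𝕜] 𝕜 × 𝕜 := (B u).prod (B w) with hf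
      set W : Submodule 𝕜 V := LinearMap.ker f with hWdef
      have hmemW : ∀ x, x ∈ W ↔ B u x = 0 ∧ B w x = 0 := by
        intro x
        simp [hWdef, hf, LinearMap.mem_ker, LinearMap.prod_apply, Prod.ext_iff]
      have hfsurj : Function.Surjective f := by
        intro p
        refine ⟨(-(p.2 / B u w)) • u + (p.1 / B u w) • w, ?_⟩
        have h1 : B w u = - B u w := skew w u
        simp only [hf, LinearMap.prod_apply, Pi.prod, map_add, map_smul, LinearMap.add_apply,
          LinearMap.smul_apply, hB u, hB w, h1, smul_eq_mul]
        have : (p.1 / B u w) * B u w = p.1 := div_mul_cancel₀ _ huw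
        have h2 : (-(p.2 / B u w)) * (- B u w) = p.2 := by field_simp
        ext <;> simp [hB u, hB w, h1, huw]
      have hrankW : 2 + finrank 𝕜 W = finrank 𝕜 V := by
        have h := LinearMap.finrank_range_add_finrank_ker f
        rw [LinearMap.range_eq_top.mpr hfsurj, finrank_top] at h
        simpa [Module.finrank_self] using h
      -- codisjoint
      set N : Submodule 𝕜 V := Submodule.span 𝕜 {u, w} with hNdef
      have hcod : Codisjoint W N := by
        rw [codisjoint_iff, eq_top_iff]
        intro v _
        set a : 𝕜 := -(B w v) / B u w with ha
        set b : 𝕜 := (B u v) / B u w with hb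
        have hr : v - (a • u + b • w) ∈ W := by
          rw [hmemW]
          constructor
          · simp only [map_sub, map_add, map_smul, smul_eq_mul, hB u]
            rw [hb]
            field_simp
            simp
          · simp only [map_sub, map_add, map_smul, smul_eq_mul, hB w, skew w u]
            rw [ha]
            field_simp
            simp
        have hn : a • u + b • w ∈ N := Submodule.add_mem _
          (Submodule.smul_mem _ _ (Submodule.subset_span (by simp)))
          (Submodule.smul_mem _ _ (Submodule.subset_span (by simp)))
        have : v = (v - (a • u + b • w)) + (a • u + b • w) := by abel
        rw [this]
        exact Submodule.add_mem _ (Submodule.mem_sup_left hr) (Submodule.mem_sup_right hn)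
      have hWN : ∀ x ∈ W, ∀ y ∈ N, B x y = 0 := by
        intro x hx y hy
        rw [hmemW] at hx
        obtain ⟨a, b, rfl⟩ := Submodule.mem_span_pair.mp hy
        have h1 : B x u = 0 := by rw [skew x u, hx.1, neg_zero]
        have h2 : B x w = 0 := by rw [skew x w, hx.2, neg_zero]
        simp [h1, h2]
      have hker : LinearMap.ker (LinearMap.BilinForm.restrict B W)
          = (LinearMap.ker B).comap W.subtype :=
        LinearMap.BilinForm.ker_restrict_eq_of_codisjoint hcod hWN
      have hkerle : LinearMap.ker B ≤ W := by
        intro v hv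
        rw [hmemW]
        rw [LinearMap.mem_ker] at hv
        constructor
        · rw [skew u v, hv]; simp
        · rw [skew w v, hv]; simp
      have hkerrank : finrank 𝕜 (LinearMap.ker (LinearMap.BilinForm.restrict B W))
          = finrank 𝕜 (LinearMap.ker B) := by
        rw [hker]
        exact (Submodule.comapSubtypeEquivOfLe hkerle).finrank_eq
      have halt : ∀ v : W, (LinearMap.BilinForm.restrict B W) v v = 0 := fun v => hB v
      have hWle : finrank 𝕜 W ≤ n := by omega
      have := ih W (LinearMap.BilinForm.restrict B W) halt hWle
      rw [hkerrank] at this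
      rw [Nat.even_iff] at this ⊢
      omega



/-- Lemma 8(b): on `E = E₁ ⊕ E₂` of even dimension, if `λ, λ₁` are 2-forms
with `E₂ ⊆ Ker λ`, `λ₁|_{E₁} = 0`, `λ₁|_{E₂} = 0`, the restriction of `λ₁` to `Ker λ`
has corank two, and `E₁ ∩ Ker (λ₁|_{Ker λ})` has dimension at least one,
then `λ + λ₁` has corank exactly two. -/
theorem stmt_11 {K E : Type*} [RCLike K] [AddCommGroup E] [Module K E] [FiniteDimensional K E]
    (E1 E2 : Submodule K E) (hcompl : IsCompl E1 E2) (heven : Even (Module.finrank K E))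
    (l l1 : E →ₗ[K] E →ₗ[K] K)
    (hl : ∀ v, l v v = 0) (hl1 : ∀ v, l1 v v = 0)
    (h2 : ∀ v ∈ E2, l v = 0)
    (h11 : ∀ v ∈ E1, ∀ w ∈ E1, l1 v w = 0)
    (h12 : ∀ v ∈ E2, ∀ w ∈ E2, l1 v w = 0)
    (hcorank : Module.finrank K
      ↥(LinearMap.ker l ⊓ LinearMap.ker (l1.compl₂ (LinearMap.ker l).subtype)) = 2)
    (hE1 : 1 ≤ Module.finrank K
      ↥(E1 ⊓ (LinearMap.ker l ⊓ LinearMap.ker (l1.compl₂ (LinearMap.ker l).subtype)))) :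
    Module.finrank K ↥(LinearMap.ker (l + l1)) = 2 := by
  have skewl : ∀ u v, l u v = - l v u := fun u v => by
    have h := hl (u + v); simp only [map_add, LinearMap.add_apply, hl u, hl v] at h
    linear_combination h
  set K0 : Submodule K E :=
    LinearMap.ker l ⊓ LinearMap.ker (l1.compl₂ (LinearMap.ker l).subtype) with hK0def
  have hmem : ∀ x, x ∈ K0 ↔ (l x = 0 ∧ ∀ n ∈ LinearMap.ker l, l1 x n = 0) := by
    intro x
    rw [hK0def, Submodule.mem_inf, LinearMap.mem_ker, LinearMap.mem_ker]
    refine and_congr Iff.rfl ⟨fun h n hn => ?_, fun h => ?_⟩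
    · have := LinearMap.congr_fun h (⟨n, hn⟩ : LinearMap.ker l)
      simpa using this
    · ext ⟨n, hn⟩
      simpa using h n hn
  set p1 : E →ₗ[K] E1 := E1.linearProjOfIsCompl E2 hcompl with hp1
  set p2 : E →ₗ[K] E2 := E2.linearProjOfIsCompl E1 hcompl.symm with hp2
  have hsum : ∀ x : E, (p1 x : E) + (p2 x : E) = x :=
    fun x => by
      exact Submodule.projection_add_projection_eq_self hcompl x
  -- a vector in E1 with l1 vanishing on E2 has l1 = 0
  have factA : ∀ v ∈ E1, (∀ w ∈ E2, l1 v w = 0) → l1 v = 0 := by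
    intro v hv hw
    ext w
    rw [← hsum w]
    simp only [map_add, LinearMap.zero_apply]
    rw [h11 v hv _ (p1 w).2, hw _ (p2 w).2, add_zero]
  -- a vector with l vanishing on E1 has l = 0
  have factL : ∀ v : E, (∀ w ∈ E1, l v w = 0) → l v = 0 := by
    intro v hv
    ext w
    rw [← hsum w]
    simp only [map_add, LinearMap.zero_apply]
    have : l v (p2 w : E) = 0 := by
      rw [skewl]
      rw [h2 _ (p2 w).2]
      simp
    rw [hv _ (p1 w).2, this, add_zero]
  -- claim 1 : E1 ⊓ ker (l + l1) = E1 ⊓ K0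
  have claim1 : E1 ⊓ LinearMap.ker (l + l1) = E1 ⊓ K0 := by
    ext v
    simp only [Submodule.mem_inf, LinearMap.mem_ker, LinearMap.add_apply]
    constructor
    · rintro ⟨hv1, hvk⟩
      have hlv : l v = 0 := by
        apply factL
        intro w hw
        have h := LinearMap.congr_fun hvk w
        simp only [LinearMap.add_apply, LinearMap.zero_apply] at h
        rw [h11 v hv1 w hw, add_zero] at h
        exact h
      have hl1v : l1 v = 0 := by
        rw [hlv, zero_add] at hvk
        exact hvk
      exact ⟨hv1, (hmem v).mpr ⟨hlv, fun n _ => by rw [hl1v]; rfl⟩⟩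
    · rintro ⟨hv1, hvk⟩
      obtain ⟨hlv, hl1v⟩ := (hmem v).mp hvk
      have : l1 v = 0 := by
        apply factA v hv1
        intro w hw
        exact hl1v w (by rw [LinearMap.mem_ker]; exact h2 w hw)
      rw [hlv, this, add_zero]
      exact ⟨hv1, rfl⟩
  -- claim 2 : projection of ker (l+l1) lands in K0
  have claim2 : ∀ v ∈ LinearMap.ker (l + l1), (p2 v : E) ∈ K0 := by
    intro v hv
    rw [LinearMap.mem_ker] at hv
    have hμ : ∀ w, l v w + l1 v w = 0 := by
      intro w
      have := LinearMap.congr_fun hv w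
      simpa using this
    have hsplit : ∀ w, l1 v w = l1 (p1 v : E) w + l1 (p2 v : E) w := by
      intro w
      conv_lhs => rw [← hsum v]
      simp [map_add]
    have h1v : l1 (p1 v : E) = 0 := by
      apply factA _ (p1 v).2
      intro w hw
      have hlvw : l v w = 0 := by rw [skewl, h2 w hw]; simp
      have hl1vw : l1 v w = 0 := by have := hμ w; rw [hlvw, zero_add] at this; exact this
      have := hsplit w
      rw [hl1vw, h12 _ (p2 v).2 w hw, add_zero] at this
      exact this.symm
    refine (hmem _).mpr ⟨h2 _ (p2 v).2, fun n hn => ?_⟩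
    have h3 : l1 (p2 v : E) n = l1 v n := by
      rw [hsplit n, h1v]
      simp
    rw [h3, eq_neg_of_add_eq_zero_right (hμ n), ← skewl n v]
    rw [LinearMap.mem_ker] at hn
    rw [hn]
    rfl
  -- the projection map T : ker (l+l1) →ₗ E
  set T : LinearMap.ker (l + l1) →ₗ[K] E :=
    E2.subtype ∘ₗ p2 ∘ₗ (LinearMap.ker (l + l1)).subtype with hT
  have hrange : LinearMap.range T ≤ E2 ⊓ K0 := by
    rintro _ ⟨v, rfl⟩
    exact ⟨(p2 (v : E)).2, claim2 _ v.2⟩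
  have hkerT : (LinearMap.ker T).map (LinearMap.ker (l + l1)).subtype
      = E1 ⊓ LinearMap.ker (l + l1) := by
    ext x
    simp only [Submodule.mem_map, LinearMap.mem_ker, Submodule.mem_inf]
    constructor
    · rintro ⟨⟨v, hv⟩, hTv, rfl⟩
      simp only [hT, LinearMap.comp_apply, Submodule.coe_subtype,
        ZeroMemClass.coe_eq_zero] at hTv
      exact ⟨(Submodule.linearProjOfIsCompl_apply_eq_zero_iff hcompl.symm).mp hTv, hv⟩
    · rintro ⟨hx1, hxk⟩
      refine ⟨⟨x, hxk⟩, ?_, rfl⟩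
      simp only [hT, LinearMap.comp_apply, Submodule.coe_subtype,
        ZeroMemClass.coe_eq_zero]
      exact (Submodule.linearProjOfIsCompl_apply_eq_zero_iff hcompl.symm).mpr hx1
  -- dimension bookkeeping
  have hd1 : finrank K ↥(E1 ⊓ K0) + finrank K ↥(E2 ⊓ K0) ≤ 2 := by
    have hinf : (E1 ⊓ K0) ⊓ (E2 ⊓ K0) = ⊥ := by
      rw [eq_bot_iff]
      intro x hx
      have : x ∈ E1 ⊓ E2 := ⟨hx.1.1, hx.2.1⟩
      rw [disjoint_iff.mp hcompl.disjoint] at this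
      exact this
    have h := Submodule.finrank_sup_add_finrank_inf_eq (E1 ⊓ K0) (E2 ⊓ K0)
    rw [hinf] at h
    have hsup : (E1 ⊓ K0) ⊔ (E2 ⊓ K0) ≤ K0 := sup_le inf_le_right inf_le_right
    have := Submodule.finrank_mono hsup
    rw [hcorank] at this
    simp only [finrank_bot, add_zero] at h
    omega
  have hrn := LinearMap.finrank_range_add_finrank_ker T
  have hkerdim : finrank K ↥(LinearMap.ker T) = finrank K ↥(E1 ⊓ K0) := by
    rw [← claim1, ← hkerT]
    exact (Submodule.finrank_map_subtype_eq _ _).symm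
  have hrangedim : finrank K ↥(LinearMap.range T) ≤ finrank K ↥(E2 ⊓ K0) :=
    Submodule.finrank_mono hrange
  have hupper : finrank K ↥(LinearMap.ker (l + l1)) ≤ 2 := by omega
  have hlower : 1 ≤ finrank K ↥(LinearMap.ker (l + l1)) := by
    have hle : E1 ⊓ K0 ≤ LinearMap.ker (l + l1) := by
      rw [← claim1]
      exact inf_le_right
    have := Submodule.finrank_mono hle
    omega
  -- parity
  have halt : ∀ v, (l + l1) v v = 0 := by
    intro v
    simp [hl v, hl1 v]
  have hpar := alt_parity_aux (𝕜 := K) (Module.finrank K E) E (l + l1) halt le_rfl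
  rw [Nat.even_iff] at hpar heven
  omega
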